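/- Let n, d ≥ 1 and suppose there exists a function c from the nonzero vectors of F_2^n to {red, blue} such that no d-dimensional linear subspace of F_2^n has all its nonzero vectors colored red and no 2-dimensional linear subspace has all its nonzero vectors colored blue. Then there exists a set S ⊆ F_2^n \ {0} such that S is sum-free, no d-dimensional linear subspace of F_2^n is contained in S + S, and no d-dimensional linear subspace of F_2^n is contained in the complement F_2^n \ S. -/

import Mathlib

open Pointwise

/-- Observation 2.1: if there is a red-blue coloring of the nonzero vectors
of `F_2^n` (`true` = red, `false` = blue) with no all-red `d`-dimensional subspace and no
all-blue `2`-dimensional subspace, then there is a sum-free set `S ⊆ F_2^n \ {0}` such that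
no `d`-dimensional subspace is contained in `S + S` and no `d`-dimensional subspace is
contained in the complement of `S`. -/
theorem stmt_11 (n d : ℕ) (hn : 1 ≤ n) (hd : 1 ≤ d)
    (c : (Fin n → ZMod 2) → Bool)
    (hred : ¬ ∃ V : Submodule (ZMod 2) (Fin n → ZMod 2),
        Module.finrank (ZMod 2) V = d ∧ ∀ v ∈ V, v ≠ 0 → c v = true)
    (hblue : ¬ ∃ W : Submodule (ZMod 2) (Fin n → ZMod 2),
        Module.finrank (ZMod 2) W = 2 ∧ ∀ v ∈ W, v ≠ 0 → c v = false) :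
    ∃ S : Set (Fin n → ZMod 2),
      S ⊆ {x | x ≠ 0} ∧
      (¬ ∃ x ∈ S, ∃ y ∈ S, x ≠ y ∧ x + y ∈ S) ∧
      (¬ ∃ V : Submodule (ZMod 2) (Fin n → ZMod 2),
          Module.finrank (ZMod 2) V = d ∧ (V : Set (Fin n → ZMod 2)) ⊆ S + S) ∧
      (¬ ∃ V : Submodule (ZMod 2) (Fin n → ZMod 2),
          Module.finrank (ZMod 2) V = d ∧ (V : Set (Fin n → ZMod 2)) ⊆ Sᶜ) := by
  set S : Set (Fin n → ZMod 2) := {x | x ≠ 0 ∧ c x = false} with hS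
  have hsf : ¬ ∃ x ∈ S, ∃ y ∈ S, x ≠ y ∧ x + y ∈ S := by
    rintro ⟨x, ⟨hx0, hxb⟩, y, ⟨hy0, hyb⟩, hxy, hs0, hsb⟩
    apply hblue
    refine ⟨Submodule.span (ZMod 2) {x, y}, ?_, ?_⟩
    · have hli : LinearIndependent (ZMod 2) ![x, y] := by
        rw [LinearIndependent.pair_iff]
        intro a b hab
        have h2 : ∀ a : ZMod 2, a = 0 ∨ a = 1 := by decide
        rcases h2 a with rfl | rfl <;> rcases h2 b with rfl | rfl <;> simp_all
      have hr : Set.range ![x, y] = {x, y} := by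
        simp [Matrix.range_cons, Matrix.range_empty, Set.pair_comm]
      have := finrank_span_eq_card hli
      rw [hr] at this
      simpa using this
    · intro v hv hv0
      rw [Submodule.mem_span_pair] at hv
      obtain ⟨a, b, hab⟩ := hv
      have h2 : ∀ a : ZMod 2, a = 0 ∨ a = 1 := by decide
      rcases h2 a with rfl | rfl <;> rcases h2 b with rfl | rfl <;> simp_all <;> subst hab <;> simp_all
  refine ⟨S, fun x hx => hx.1, hsf, ?_, ?_⟩
  · rintro ⟨V, hVd, hVS⟩
    apply hred
    refine ⟨V, hVd, fun v hv hv0 => ?_⟩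
    obtain ⟨s, hs, t, ht, hst⟩ := hVS hv
    have hst' : s + t = v := hst
    have hne : s ≠ t := by
      rintro rfl
      exact hv0 (by rw [← hst']; funext i; exact CharTwo.add_self_eq_zero (s i))
    by_contra hcv
    have : v ∈ S := ⟨hv0, by cases h : c v <;> simp_all⟩
    exact hsf ⟨s, hs, t, ht, hne, by rw [hst']; exact this⟩
  · rintro ⟨V, hVd, hVS⟩
    apply hred
    refine ⟨V, hVd, fun v hv hv0 => ?_⟩
    have := hVS hv
    simp [S] at this
    cases h : c v <;> simp_all
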